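/- Let E₁ and E₂ be Banach spaces over 𝕜, let 𝒜₁ ⊆ B(E₁) and 𝒜₂ ⊆ B(E₂) be standard subalgebras, and let T : 𝒜₁ → 𝒜₂ be a biseparating linear bijection. Then for every A ∈ 𝒜₁ of rank one, the operator T(A) has rank one. -/

import Mathlib

set_option synthInstance.maxHeartbeats 400000
set_option maxHeartbeats 1000000

/-- A subalgebra of `B(E)` is *standard* if it contains every continuous finite-rank
operator (it contains the identity automatically, being a subalgebra). -/
def IsStandardSubalgebra (𝕜 : Type*) [RCLike 𝕜] {E : Type*} [NormedAddCommGroup E]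
    [NormedSpace 𝕜 E] (𝒜 : Subalgebra 𝕜 (E →L[𝕜] E)) : Prop :=
  ∀ A : E →L[𝕜] E, FiniteDimensional 𝕜 (LinearMap.range (A : E →ₗ[𝕜] E)) → A ∈ 𝒜

section Aux

variable {𝕜 : Type*} [RCLike 𝕜] {E : Type*} [NormedAddCommGroup E] [NormedSpace 𝕜 E]

/-- The zero-product-definable property characterizing rank-one elements:
`a` is nonzero and its right annihilator is maximal among right annihilators
of nonzero elements. -/
def AnnMax (𝒜 : Subalgebra 𝕜 (E →L[𝕜] E)) (a : 𝒜) : Prop :=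
  a ≠ 0 ∧ ∀ b : 𝒜, (∀ c : 𝒜, a * c = 0 → b * c = 0) →
    b = 0 ∨ ∀ c : 𝒜, b * c = 0 → a * c = 0

lemma smulRight_mem_standard {𝒜 : Subalgebra 𝕜 (E →L[𝕜] E)}
    (h𝒜 : IsStandardSubalgebra 𝕜 𝒜) (f : E →L[𝕜] 𝕜) (x : E) : f.smulRight x ∈ 𝒜 := by
  apply h𝒜
  have hle : LinearMap.range ((f.smulRight x : E →L[𝕜] E) : E →ₗ[𝕜] E)
      ≤ Submodule.span 𝕜 {x} := by
    rintro y ⟨z, rfl⟩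
    exact Submodule.smul_mem _ _ (Submodule.mem_span_singleton_self x)
  haveI : FiniteDimensional 𝕜 (Submodule.span 𝕜 ({x} : Set E)) :=
    FiniteDimensional.span_of_finite 𝕜 (Set.finite_singleton x)
  exact Submodule.finiteDimensional_of_le hle

lemma exists_dual_pair {u v : E} (h : LinearIndependent 𝕜 ![u, v]) :
    ∃ g : E →L[𝕜] 𝕜, g u = 0 ∧ g v = 1 := by
  set p := Submodule.span 𝕜 (Set.range ![u, v]) with hp
  haveI : FiniteDimensional 𝕜 p := FiniteDimensional.span_of_finite 𝕜 (Set.finite_range _)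
  let bas : Module.Basis (Fin 2) 𝕜 p := Module.Basis.span h
  let f : p →L[𝕜] 𝕜 := LinearMap.toContinuousLinearMap (bas.coord 1)
  obtain ⟨g, hg, -⟩ := exists_extension_norm_eq p f
  have h0 : ((bas 0 : p) : E) = u := by
    rw [Module.Basis.span_apply]; simp
  have h1 : ((bas 1 : p) : E) = v := by
    rw [Module.Basis.span_apply]; simp
  refine ⟨g, ?_, ?_⟩
  · rw [← h0, hg (bas 0)]
    show (bas.coord 1) (bas 0) = 0
    simp [Module.Basis.coord_apply, Module.Basis.repr_self]
  · rw [← h1, hg (bas 1)]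
    show (bas.coord 1) (bas 1) = 1
    simp [Module.Basis.coord_apply, Module.Basis.repr_self]

lemma coe_ne_zero_of_ne_zero {𝒜 : Subalgebra 𝕜 (E →L[𝕜] E)} {a : 𝒜} (h : a ≠ 0) :
    (a : E →L[𝕜] E) ≠ 0 := by
  intro h0
  exact h (Subtype.ext h0)

lemma mul_eq_zero_subalg {𝒜 : Subalgebra 𝕜 (E →L[𝕜] E)} {a b : 𝒜}
    (h : ∀ y : E, (a : E →L[𝕜] E) ((b : E →L[𝕜] E) y) = 0) : a * b = 0 := by
  apply Subtype.ext
  rw [MulMemClass.coe_mul]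
  exact ContinuousLinearMap.ext fun y => h y

lemma apply_apply_eq_zero_of_mul_eq_zero {𝒜 : Subalgebra 𝕜 (E →L[𝕜] E)} {a b : 𝒜}
    (h : a * b = 0) (y : E) : (a : E →L[𝕜] E) ((b : E →L[𝕜] E) y) = 0 := by
  have := congrArg (fun z : 𝒜 => (z : E →L[𝕜] E) y) h
  simpa [ContinuousLinearMap.mul_apply] using this

lemma annMax_of_rank_one {𝒜 : Subalgebra 𝕜 (E →L[𝕜] E)}
    (h𝒜 : IsStandardSubalgebra 𝕜 𝒜) (a : 𝒜)
    (ha : Module.finrank 𝕜 (LinearMap.range ((a : E →L[𝕜] E) : E →ₗ[𝕜] E)) = 1) :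
    AnnMax 𝒜 a := by
  set A : E →L[𝕜] E := (a : E →L[𝕜] E) with hAdef
  have hA0 : a ≠ 0 := by
    intro h
    have hA : A = 0 := by rw [hAdef, h]; rfl
    rw [hA] at ha
    rw [show ((0 : E →L[𝕜] E) : E →ₗ[𝕜] E) = 0 from rfl, LinearMap.range_zero,
      finrank_bot] at ha
    exact zero_ne_one ha
  refine ⟨hA0, ?_⟩
  intro b H
  by_cases hb : b = 0
  · exact Or.inl hb
  right
  set B : E →L[𝕜] E := (b : E →L[𝕜] E) with hBdef
  -- Step 1: ker A ≤ ker B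
  have hker : ∀ x : E, A x = 0 → B x = 0 := by
    intro x hx
    by_cases hx0 : x = 0
    · simp [hx0]
    obtain ⟨f, -, hf⟩ := exists_dual_vector 𝕜 x (norm_ne_zero_iff.mpr hx0)
    set c : 𝒜 := ⟨f.smulRight x, smulRight_mem_standard h𝒜 f x⟩ with hc
    have hac : a * c = 0 := by
      apply mul_eq_zero_subalg
      intro y
      show A ((f.smulRight x) y) = 0
      rw [ContinuousLinearMap.smulRight_apply, map_smul, hx, smul_zero]
    have hbc := H c hac
    have := apply_apply_eq_zero_of_mul_eq_zero hbc x
    rw [show ((c : E →L[𝕜] E)) x = f x • x from ContinuousLinearMap.smulRight_apply,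
      map_smul, hf] at this
    have hnorm : (‖x‖ : 𝕜) ≠ 0 := by
      simpa using norm_ne_zero_iff.mpr hx0
    rcases smul_eq_zero.mp this with h | h
    · exact absurd h hnorm
    · exact h
  -- Step 2: ker B = ker A via the one-dimensional quotient
  have hrange : FiniteDimensional 𝕜 (LinearMap.range (A : E →ₗ[𝕜] E)) :=
    Module.finite_of_finrank_pos (ha ▸ one_pos)
  set K : Submodule 𝕜 E := LinearMap.ker (A : E →ₗ[𝕜] E) with hK
  have eQ : (E ⧸ K) ≃ₗ[𝕜] LinearMap.range (A : E →ₗ[𝕜] E) :=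
    (A : E →ₗ[𝕜] E).quotKerEquivRange
  haveI : FiniteDimensional 𝕜 (E ⧸ K) := Module.Finite.equiv eQ.symm
  have hQ1 : Module.finrank 𝕜 (E ⧸ K) = 1 := by
    rw [eQ.finrank_eq]; exact ha
  have hle : K ≤ LinearMap.ker (B : E →ₗ[𝕜] E) := fun x hx => hker x hx
  set p : Submodule 𝕜 (E ⧸ K) := Submodule.map K.mkQ (LinearMap.ker (B : E →ₗ[𝕜] E)) with hpdef
  have hkerB : LinearMap.ker (B : E →ₗ[𝕜] E) = K := by
    have hple : Module.finrank 𝕜 p ≤ 1 := hQ1 ▸ Submodule.finrank_le p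
    rcases Nat.le_one_iff_eq_zero_or_eq_one.mp hple with h0 | h1
    · have hbot : p = ⊥ := Submodule.finrank_eq_zero.mp h0
      have hlek : LinearMap.ker (B : E →ₗ[𝕜] E) ≤ K := by
        intro x hx
        have hmem : K.mkQ x ∈ p := Submodule.mem_map_of_mem hx
        rw [hbot, Submodule.mem_bot, Submodule.mkQ_apply,
          Submodule.Quotient.mk_eq_zero] at hmem
        exact hmem
      exact le_antisymm hlek hle
    · exfalso
      have htop : p = ⊤ := Submodule.eq_top_of_finrank_eq (h1.trans hQ1.symm)
      have hcm := Submodule.comap_map_mkQ K (LinearMap.ker (B : E →ₗ[𝕜] E))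
      rw [← hpdef, htop, Submodule.comap_top, sup_eq_right.mpr hle] at hcm
      have hB0 : (B : E →ₗ[𝕜] E) = 0 := LinearMap.ker_eq_top.mp hcm.symm
      apply coe_ne_zero_of_ne_zero hb
      exact ContinuousLinearMap.coe_injective hB0
  -- Step 3: conclude
  intro c hbc
  apply mul_eq_zero_subalg
  intro y
  have hcy : (c : E →L[𝕜] E) y ∈ LinearMap.ker (B : E →ₗ[𝕜] E) :=
    apply_apply_eq_zero_of_mul_eq_zero hbc y
  rw [hkerB] at hcy
  exact hcy

lemma rank_one_of_annMax [CompleteSpace E] {𝒜 : Subalgebra 𝕜 (E →L[𝕜] E)}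
    (h𝒜 : IsStandardSubalgebra 𝕜 𝒜) (a : 𝒜) (h : AnnMax 𝒜 a) :
    Module.finrank 𝕜 (LinearMap.range ((a : E →L[𝕜] E) : E →ₗ[𝕜] E)) = 1 := by
  set A : E →L[𝕜] E := (a : E →L[𝕜] E) with hAdef
  have hA0 : A ≠ 0 := coe_ne_zero_of_ne_zero h.1
  obtain ⟨x₀, hx₀⟩ : ∃ x : E, A x ≠ 0 := by
    by_contra hc
    push_neg at hc
    exact hA0 (ContinuousLinearMap.ext fun x => hc x)
  -- key pairwise dependence claim
  have key : ∀ x₁ x₂ : E, ¬ LinearIndependent 𝕜 ![A x₁, A x₂] := by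
    intro x₁ x₂ hli
    have hu : A x₁ ≠ 0 := by
      have := hli.ne_zero 0
      simpa using this
    have hx₁ : x₁ ≠ 0 := by
      intro hx
      exact hu (by simp [hx])
    obtain ⟨g, hg0, hg1⟩ := exists_dual_pair hli
    set B : E →L[𝕜] E := (g.comp A).smulRight (A x₁) with hBdef
    set b : 𝒜 := ⟨B, smulRight_mem_standard h𝒜 (g.comp A) (A x₁)⟩ with hbdef
    have hb0 : b ≠ 0 := by
      intro hb
      have hB0 : B = 0 := by
        have h' := congrArg (fun z : 𝒜 => (z : E →L[𝕜] E)) hb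
        exact h'
      have : B x₂ = 0 := by rw [hB0]; simp
      rw [hBdef] at this
      simp only [ContinuousLinearMap.smulRight_apply, ContinuousLinearMap.coe_comp',
        Function.comp_apply] at this
      rw [hg1, one_smul] at this
      exact hu this
    have hRsub : ∀ c : 𝒜, a * c = 0 → b * c = 0 := by
      intro c hac
      apply mul_eq_zero_subalg
      intro y
      have hAc : A ((c : E →L[𝕜] E) y) = 0 := apply_apply_eq_zero_of_mul_eq_zero hac y
      show B ((c : E →L[𝕜] E) y) = 0
      rw [hBdef]
      simp only [ContinuousLinearMap.smulRight_apply, ContinuousLinearMap.coe_comp',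
        Function.comp_apply]
      rw [hAc, map_zero, zero_smul]
    rcases h.2 b hRsub with hb | hmax
    · exact hb0 hb
    obtain ⟨f, -, hf⟩ := exists_dual_vector 𝕜 x₁ (norm_ne_zero_iff.mpr hx₁)
    set c : 𝒜 := ⟨f.smulRight x₁, smulRight_mem_standard h𝒜 f x₁⟩ with hcdef
    have hbc : b * c = 0 := by
      apply mul_eq_zero_subalg
      intro y
      show B ((f.smulRight x₁) y) = 0
      rw [hBdef]
      simp only [ContinuousLinearMap.smulRight_apply, ContinuousLinearMap.coe_comp',
        Function.comp_apply, map_smul]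
      rw [hg0, zero_smul, smul_zero]
    have hac := hmax c hbc
    have := apply_apply_eq_zero_of_mul_eq_zero hac x₁
    rw [show ((c : E →L[𝕜] E)) x₁ = f x₁ • x₁ from ContinuousLinearMap.smulRight_apply,
      map_smul, hf] at this
    have hnorm : (‖x₁‖ : 𝕜) ≠ 0 := by
      simpa using norm_ne_zero_iff.mpr hx₁
    rcases smul_eq_zero.mp this with h' | h'
    · exact hnorm h'
    · exact hu h'
  -- range A = span {A x₀}
  have hle : LinearMap.range (A : E →ₗ[𝕜] E) ≤ Submodule.span 𝕜 {A x₀} := by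
    rintro y ⟨x, rfl⟩
    show A x ∈ Submodule.span 𝕜 {A x₀}
    by_contra hmem
    apply key x x₀
    rw [linearIndependent_fin2]
    constructor
    · simpa using hx₀
    · intro t ht
      apply hmem
      rw [Submodule.mem_span_singleton]
      exact ⟨t, by simpa using ht⟩
  have hge : Submodule.span 𝕜 {A x₀} ≤ LinearMap.range (A : E →ₗ[𝕜] E) := by
    rw [Submodule.span_le, Set.singleton_subset_iff]
    exact ⟨x₀, rfl⟩
  rw [le_antisymm hle hge]
  exact finrank_span_singleton hx₀

end Aux

theorem biseparating_maps_rank_one_to_rank_one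
    {𝕜 : Type*} [RCLike 𝕜]
    {E₁ E₂ : Type*} [NormedAddCommGroup E₁] [NormedSpace 𝕜 E₁] [CompleteSpace E₁]
    [NormedAddCommGroup E₂] [NormedSpace 𝕜 E₂] [CompleteSpace E₂]
    (𝒜₁ : Subalgebra 𝕜 (E₁ →L[𝕜] E₁)) (𝒜₂ : Subalgebra 𝕜 (E₂ →L[𝕜] E₂))
    (h𝒜₁ : IsStandardSubalgebra 𝕜 𝒜₁) (h𝒜₂ : IsStandardSubalgebra 𝕜 𝒜₂)
    (T : 𝒜₁ →ₗ[𝕜] 𝒜₂) (hbij : Function.Bijective T)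
    (hsep : ∀ a b : 𝒜₁, a * b = 0 → T a * T b = 0)
    (hsep' : ∀ a b : 𝒜₁, T a * T b = 0 → a * b = 0) :
    ∀ A : 𝒜₁, Module.finrank 𝕜 (LinearMap.range ((A : E₁ →L[𝕜] E₁) : E₁ →ₗ[𝕜] E₁)) = 1 →
      Module.finrank 𝕜 (LinearMap.range ((T A : E₂ →L[𝕜] E₂) : E₂ →ₗ[𝕜] E₂)) = 1 := by
  intro A hA
  have hP := annMax_of_rank_one h𝒜₁ A hA
  apply rank_one_of_annMax h𝒜₂ (T A)
  constructor
  · intro h0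
    have hA0 : A = 0 := hbij.1 (by rw [h0, map_zero])
    exact hP.1 hA0
  · intro b' hb'
    obtain ⟨b, rfl⟩ := hbij.2 b'
    have hb : ∀ c : 𝒜₁, A * c = 0 → b * c = 0 := fun c hc =>
      hsep' _ _ (hb' _ (hsep _ _ hc))
    rcases hP.2 b hb with h | h
    · left; rw [h, map_zero]
    · right
      intro c' hc'
      obtain ⟨c, rfl⟩ := hbij.2 c'
      exact hsep _ _ (h c (hsep' _ _ hc'))
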